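/- Let K be a number field of degree m with residue ρ of ζ_K at s = 1. Then the function h(s) = ζ_K(s) − ρs/(s−1) extends holomorphically to Re(s) > 1 − 1/m and equals s ∫_1^∞ (N_K(t) − ρt) t^{−s−1} dt there. -/

import Mathlib

open Filter NumberField MeasureTheory

section Aux

variable (K : Type*) [Field K] [NumberField K]

lemma DZC.one_le_nrm (I : {I : Ideal (𝓞 K) // I ≠ ⊥}) : 1 ≤ (Ideal.absNorm I.1 : ℝ) := by
  have h : Ideal.absNorm I.1 ≠ 0 := by
    simpa [Ideal.absNorm_eq_zero_iff] using I.2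
  exact_mod_cast Nat.one_le_iff_ne_zero.mpr h

lemma DZC.countable_ideal : Countable (Ideal (𝓞 K)) := by
  rw [← Set.countable_univ_iff]
  have h : (Set.univ : Set (Ideal (𝓞 K))) = ⋃ n : ℕ, {I | Ideal.absNorm I = n} := by
    ext I; simp
  rw [h]
  exact Set.countable_iUnion fun n => (Ideal.finite_setOf_absNorm_eq n).countable

lemma DZC.finite_le (t : ℝ) : {I : Ideal (𝓞 K) | (Ideal.absNorm I : ℝ) ≤ t}.Finite := by
  refine (Ideal.finite_setOf_absNorm_le ⌈t⌉₊).subset fun I hI => ?_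
  simp only [Set.mem_setOf_eq] at hI ⊢
  exact_mod_cast hI.trans (Nat.le_ceil t)

lemma DZC.finite_le' (t : ℝ) :
    {I : {I : Ideal (𝓞 K) // I ≠ ⊥} | (Ideal.absNorm I.1 : ℝ) ≤ t}.Finite :=
  (DZC.finite_le K t).preimage
    (f := (Subtype.val : {I : Ideal (𝓞 K) // I ≠ ⊥} → Ideal (𝓞 K)))
    Subtype.val_injective.injOn

end Aux

/-- The function `h(s) = ζ_K(s) − ρs/(s−1)` extends holomorphically to `Re(s) > 1 − 1/m`
(`m = [K:ℚ]`) and equals `s ∫_1^∞ (N_K(t) − ρt) t^{−s−1} dt` there. -/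
theorem dedekind_zeta_continuation (K : Type*) [Field K] [NumberField K]
    (ρ : ℝ) (Z : ℂ → ℂ)
    (hZ : ∀ s : ℂ, 1 < s.re →
      HasSum (fun I : {I : Ideal (𝓞 K) // I ≠ ⊥} =>
        (Ideal.absNorm I.1 : ℂ) ^ (-s)) (Z s))
    (NK : ℝ → ℝ)
    (hNK : ∀ t : ℝ, NK t =
      (Nat.card {I : Ideal (𝓞 K) // I ≠ ⊥ ∧ (Ideal.absNorm I : ℝ) ≤ t} : ℝ))
    (hcount : ∃ C : ℝ, ∀ t : ℝ, 1 ≤ t →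
      |NK t - ρ * t| ≤ C * t ^ ((1 : ℝ) - 1 / (Module.finrank ℚ K : ℝ))) :
    ∃ h : ℂ → ℂ,
      (∀ s : ℂ, 1 - 1 / (Module.finrank ℚ K : ℝ) < s.re → DifferentiableAt ℂ h s) ∧
      (∀ s : ℂ, 1 < s.re → h s = Z s - (ρ : ℂ) * s / (s - 1)) ∧
      (∀ s : ℂ, 1 - 1 / (Module.finrank ℚ K : ℝ) < s.re →
        h s = s * ∫ t in Set.Ioi (1 : ℝ),
          ((NK t : ℂ) - (ρ : ℂ) * (t : ℂ)) * (t : ℂ) ^ (-s - 1)) := by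
  classical
  have := DZC.countable_ideal K
  obtain ⟨C, hC⟩ := hcount
  set m : ℝ := (Module.finrank ℚ K : ℝ) with hm
  have hm1 : (1 : ℝ) ≤ m := by
    rw [hm]
    exact_mod_cast Module.finrank_pos (R := ℚ) (M := K)
  set e : ℝ := 1 - 1 / m with he
  have he0 : 0 ≤ e := by
    have : 1 / m ≤ 1 := by
      rw [div_le_one (by linarith)]; exact hm1
    simp only [he]; linarith
  have he1 : e ≤ 1 := by
    have : 0 < 1 / m := by positivity
    simp only [he]; linarith
  have hC0 : 0 ≤ C := by
    have h := (abs_nonneg (NK 1 - ρ * 1)).trans (hC 1 le_rfl)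
    simpa using h
  -- NK is monotone, hence measurable
  have hNKmono : Monotone NK := by
    intro a b hab
    rw [hNK a, hNK b]
    have hfin : {I : Ideal (𝓞 K) | I ≠ ⊥ ∧ (Ideal.absNorm I : ℝ) ≤ b}.Finite :=
      (DZC.finite_le K b).subset fun I hI => hI.2
    have hsub : {I : Ideal (𝓞 K) | I ≠ ⊥ ∧ (Ideal.absNorm I : ℝ) ≤ a} ⊆
        {I : Ideal (𝓞 K) | I ≠ ⊥ ∧ (Ideal.absNorm I : ℝ) ≤ b} :=
      fun I hI => ⟨hI.1, hI.2.trans hab⟩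
    exact_mod_cast Nat.card_mono hfin hsub
  have hNKmeas : Measurable NK := hNKmono.measurable
  -- the counting function as a finite card
  have hcard : ∀ t : ℝ, NK t = ((DZC.finite_le' K t).toFinset.card : ℝ) := by
    intro t
    rw [hNK t]
    congr 1
    rw [Nat.card_congr (Equiv.subtypeSubtypeEquivSubtypeInter
      (fun I : Ideal (𝓞 K) => I ≠ ⊥) (fun I => (Ideal.absNorm I : ℝ) ≤ t)).symm]
    exact (Nat.card_coe_set_eq _).trans
      (Set.ncard_eq_toFinset_card _ (DZC.finite_le' K t))
  -- the indicator family
  set f : ℂ → {I : Ideal (𝓞 K) // I ≠ ⊥} → ℝ → ℂ := fun s I =>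
    Set.indicator (Set.Ici ((Ideal.absNorm I.1 : ℝ))) (fun t => (t : ℂ) ^ (-s - 1)) with hf
  have hsum_pt : ∀ (s : ℂ) (t : ℝ),
      ∑' I : {I : Ideal (𝓞 K) // I ≠ ⊥}, f s I t = (NK t : ℂ) * (t : ℂ) ^ (-s - 1) := by
    intro s t
    have hfin := DZC.finite_le' K t
    have hzero : ∀ I ∉ hfin.toFinset, f s I t = 0 := by
      intro I hI
      rw [Set.Finite.mem_toFinset] at hI
      exact Set.indicator_of_notMem (by simpa using hI) _
    rw [tsum_eq_sum hzero]
    have hval : ∀ I ∈ hfin.toFinset, f s I t = (t : ℂ) ^ (-s - 1) := by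
      intro I hI
      rw [Set.Finite.mem_toFinset] at hI
      exact Set.indicator_of_mem (by simpa using hI) _
    rw [Finset.sum_congr rfl hval, Finset.sum_const, hcard t, nsmul_eq_mul]
    push_cast
    ring
  -- a.e. set identity
  have hIoiae : ∀ I : {I : Ideal (𝓞 K) // I ≠ ⊥},
      (Set.Ioi (1 : ℝ) ∩ Set.Ici ((Ideal.absNorm I.1 : ℝ)) : Set ℝ)
        =ᵐ[volume] Set.Ioi ((Ideal.absNorm I.1 : ℝ)) := by
    intro I
    rw [MeasureTheory.ae_eq_set]
    constructor
    · refine measure_mono_null (fun x hx => ?_)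
        (Real.volume_singleton (a := (Ideal.absNorm I.1 : ℝ)))
      obtain ⟨⟨h1, h2⟩, h3⟩ := hx
      simp only [Set.mem_Ioi, not_lt] at h3
      exact le_antisymm h3 h2
    · refine measure_mono_null (fun x hx => ?_) (measure_empty (μ := volume))
      obtain ⟨h1, h2⟩ := hx
      exact absurd ⟨(DZC.one_le_nrm K I).trans_lt h1, Set.mem_Ici.mpr (le_of_lt (Set.mem_Ioi.mp h1))⟩ h2
  have hnpos : ∀ I : {I : Ideal (𝓞 K) // I ≠ ⊥}, (0 : ℝ) < (Ideal.absNorm I.1 : ℝ) :=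
    fun I => lt_of_lt_of_le zero_lt_one (DZC.one_le_nrm K I)
  -- integrability of each term
  have hint_f : ∀ (s : ℂ), 0 < s.re → ∀ I : {I : Ideal (𝓞 K) // I ≠ ⊥},
      IntegrableOn (f s I) (Set.Ioi (1 : ℝ)) volume := by
    intro s hs I
    rw [hf]
    rw [IntegrableOn, integrable_indicator_iff measurableSet_Ici, IntegrableOn,
      Measure.restrict_restrict measurableSet_Ici, Set.inter_comm,
      Measure.restrict_congr_set (hIoiae I)]
    exact integrableOn_Ioi_cpow_of_lt
      (by simp only [Complex.sub_re, Complex.neg_re, Complex.one_re]; linarith) (hnpos I)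
  -- value of each term's integral
  have hintval : ∀ (s : ℂ), 0 < s.re → ∀ I : {I : Ideal (𝓞 K) // I ≠ ⊥},
      ∫ t in Set.Ioi (1 : ℝ), f s I t = ((Ideal.absNorm I.1 : ℂ)) ^ (-s) / s := by
    intro s hs I
    rw [hf]
    simp only
    rw [setIntegral_indicator measurableSet_Ici, setIntegral_congr_set (hIoiae I),
      integral_Ioi_cpow_of_lt
        (by simp only [Complex.sub_re, Complex.neg_re, Complex.one_re]; linarith) (hnpos I)]
    rw [show -s - 1 + 1 = -s by ring]
    push_cast
    rw [neg_div_neg_eq]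
  -- value of each term's norm-integral
  have hnormint : ∀ (s : ℂ), 0 < s.re → ∀ I : {I : Ideal (𝓞 K) // I ≠ ⊥},
      ∫ t in Set.Ioi (1 : ℝ), ‖f s I t‖
        = ((Ideal.absNorm I.1 : ℝ)) ^ (-s.re) / s.re := by
    intro s hs I
    have h1 : ∀ t : ℝ, ‖f s I t‖ = Set.indicator (Set.Ici ((Ideal.absNorm I.1 : ℝ)))
        (fun t => ‖(t : ℂ) ^ (-s - 1)‖) t := fun t => norm_indicator_eq_indicator_norm _ _
    simp_rw [h1]
    rw [setIntegral_indicator measurableSet_Ici, setIntegral_congr_set (hIoiae I)]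
    have h2 : ∀ t ∈ Set.Ioi ((Ideal.absNorm I.1 : ℝ)),
        ‖(t : ℂ) ^ (-s - 1)‖ = t ^ ((-s - 1).re) := by
      intro t ht
      rw [Complex.norm_cpow_eq_rpow_re_of_pos ((hnpos I).trans ht)]
    rw [setIntegral_congr_fun measurableSet_Ioi h2,
      integral_Ioi_rpow_of_lt
        (by simp only [Complex.sub_re, Complex.neg_re, Complex.one_re]; linarith) (hnpos I)]
    rw [show (-s - 1).re + 1 = -s.re by
      simp only [Complex.sub_re, Complex.neg_re, Complex.one_re]; ring]
    rw [neg_div_neg_eq]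
  -- summability of norms
  have hsummable : ∀ σ : ℝ, 1 < σ →
      Summable (fun I : {I : Ideal (𝓞 K) // I ≠ ⊥} => (Ideal.absNorm I.1 : ℝ) ^ (-σ)) := by
    intro σ hσ
    have h := (hZ (σ : ℂ) (by simpa using hσ)).summable
    rw [← Complex.summable_ofReal]
    refine h.congr fun I => ?_
    rw [Complex.ofReal_cpow (by positivity)]
    push_cast
    rfl
  -- the key HasSum identity
  have hNKint_eq : ∀ s : ℂ, 1 < s.re →
      HasSum (fun I : {I : Ideal (𝓞 K) // I ≠ ⊥} => (Ideal.absNorm I.1 : ℂ) ^ (-s) / s)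
        (∫ t in Set.Ioi (1 : ℝ), (NK t : ℂ) * (t : ℂ) ^ (-s - 1)) := by
    intro s hs
    have h0 : 0 < s.re := by linarith
    have hsumnorm : Summable fun I : {I : Ideal (𝓞 K) // I ≠ ⊥} =>
        ∫ t in Set.Ioi (1 : ℝ), ‖f s I t‖ := by
      refine ((hsummable s.re hs).div_const s.re).congr fun I => ?_
      exact (hnormint s h0 I).symm
    have key := hasSum_integral_of_summable_integral_norm
      (μ := volume.restrict (Set.Ioi (1 : ℝ))) (F := f s)
      (fun I => hint_f s h0 I) hsumnorm
    have e1 : (fun I : {I : Ideal (𝓞 K) // I ≠ ⊥} => ∫ t in Set.Ioi (1 : ℝ), f s I t)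
        = fun I => (Ideal.absNorm I.1 : ℂ) ^ (-s) / s := funext fun I => hintval s h0 I
    have e2 : (∫ t in Set.Ioi (1 : ℝ), ∑' I : {I : Ideal (𝓞 K) // I ≠ ⊥}, f s I t)
        = ∫ t in Set.Ioi (1 : ℝ), (NK t : ℂ) * (t : ℂ) ^ (-s - 1) :=
      integral_congr_ae (Eventually.of_forall fun t => hsum_pt s t)
    rw [e1, e2] at key
    exact key
  -- the rho part
  have hρptwise : ∀ s : ℂ, ∀ t ∈ Set.Ioi (1 : ℝ),
      ((ρ : ℂ) * t) * (t : ℂ) ^ (-s - 1) = (ρ : ℂ) * (t : ℂ) ^ (-s) := by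
    intro s t ht
    have ht0 : (t : ℂ) ≠ 0 := by
      simp only [ne_eq, Complex.ofReal_eq_zero]
      have := Set.mem_Ioi.mp ht; intro h; rw [h] at this; linarith
    rw [show (-s : ℂ) = 1 + (-s - 1) by ring, Complex.cpow_add _ _ ht0, Complex.cpow_one]
    ring
  have hρint : ∀ s : ℂ, 1 < s.re →
      ∫ t in Set.Ioi (1 : ℝ), ((ρ : ℂ) * t) * (t : ℂ) ^ (-s - 1) = (ρ : ℂ) / (s - 1) := by
    intro s hs
    have hs1 : s - 1 ≠ 0 := by
      intro h
      rw [sub_eq_zero] at h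
      rw [h] at hs; simp at hs
    rw [setIntegral_congr_fun measurableSet_Ioi (hρptwise s), integral_const_mul,
      integral_Ioi_cpow_of_lt (by simp only [Complex.neg_re]; linarith) zero_lt_one]
    rw [Complex.ofReal_one, Complex.one_cpow]
    rw [show -s + 1 = -(s - 1) by ring, neg_div_neg_eq, mul_one_div]
  have hρintg : ∀ s : ℂ, 1 < s.re →
      IntegrableOn (fun t : ℝ => ((ρ : ℂ) * t) * (t : ℂ) ^ (-s - 1)) (Set.Ioi 1) volume := by
    intro s hs
    exact IntegrableOn.congr_fun
      (((integrableOn_Ioi_cpow_of_lt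
        (by simp only [Complex.neg_re]; linarith) zero_lt_one)).const_mul (ρ : ℂ))
      (fun t ht => (hρptwise s t ht).symm) measurableSet_Ioi
  -- integrability of NK part
  have hNKintg : ∀ s : ℂ, 1 < s.re →
      IntegrableOn (fun t : ℝ => (NK t : ℂ) * (t : ℂ) ^ (-s - 1)) (Set.Ioi 1) volume := by
    intro s hs
    have hmeas : AEStronglyMeasurable (fun t : ℝ => (NK t : ℂ) * (t : ℂ) ^ (-s - 1))
        (volume.restrict (Set.Ioi 1)) := by
      refine AEStronglyMeasurable.mul
        ((Complex.measurable_ofReal.comp hNKmeas).aestronglyMeasurable) ?_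
      refine ContinuousOn.aestronglyMeasurable (fun t ht => ?_) measurableSet_Ioi
      exact (Complex.continuousAt_ofReal_cpow_const _ _
        (Or.inr (zero_lt_one.trans ht).ne')).continuousWithinAt
    refine Integrable.mono'
      ((integrableOn_Ioi_rpow_of_lt (a := -s.re) (by linarith) zero_lt_one).const_mul
        (C + |ρ|)) hmeas ?_
    filter_upwards [ae_restrict_mem measurableSet_Ioi] with t ht
    have ht1 : 1 < t := ht
    have ht0 : 0 < t := by linarith
    rw [norm_mul, Complex.norm_real,
      Complex.norm_cpow_eq_rpow_re_of_pos ht0, Real.norm_eq_abs]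
    have hte : t ^ e ≤ t := by
      calc t ^ e ≤ t ^ (1 : ℝ) := Real.rpow_le_rpow_of_exponent_le ht1.le he1
      _ = t := Real.rpow_one t
    have h2 : |NK t| ≤ (C + |ρ|) * t := by
      have h3 := hC t ht1.le
      calc |NK t| = |(NK t - ρ * t) + ρ * t| := by ring_nf
        _ ≤ |NK t - ρ * t| + |ρ * t| := abs_add_le _ _
        _ ≤ C * t ^ e + |ρ| * t := by
            rw [abs_mul, abs_of_pos ht0]; exact add_le_add h3 le_rfl
        _ ≤ C * t + |ρ| * t := by nlinarith
        _ = (C + |ρ|) * t := by ring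
    calc |NK t| * t ^ ((-s - 1).re)
        ≤ ((C + |ρ|) * t) * t ^ ((-s - 1).re) :=
          mul_le_mul_of_nonneg_right h2 (Real.rpow_nonneg ht0.le _)
      _ = (C + |ρ|) * t ^ (-s.re) := by
          rw [mul_assoc]
          congr 1
          rw [show t * t ^ ((-s - 1).re) = t ^ (1 : ℝ) * t ^ ((-s - 1).re) by
            rw [Real.rpow_one], ← Real.rpow_add ht0]
          congr 1
          simp only [Complex.sub_re, Complex.neg_re, Complex.one_re]
          ring
  -- splitting
  have hsplit : ∀ s : ℂ, 1 < s.re →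
      ∫ t in Set.Ioi (1 : ℝ), ((NK t : ℂ) - (ρ : ℂ) * (t : ℂ)) * (t : ℂ) ^ (-s - 1)
        = (∫ t in Set.Ioi (1 : ℝ), (NK t : ℂ) * (t : ℂ) ^ (-s - 1))
          - ∫ t in Set.Ioi (1 : ℝ), ((ρ : ℂ) * t) * (t : ℂ) ^ (-s - 1) := by
    intro s hs
    rw [← integral_sub (hNKintg s hs) (hρintg s hs)]
    congr 1
    funext t
    ring
  -- the mellin kernel function
  set F : ℝ → ℂ := Set.indicator (Set.Ioi 1) (fun t => (NK t : ℂ) - (ρ : ℂ) * (t : ℂ)) with hF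
  have hFnorm : ∀ t : ℝ, 1 < t → ‖F t‖ = |NK t - ρ * t| := by
    intro t ht
    rw [hF, Set.indicator_of_mem (Set.mem_Ioi.mpr ht)]
    rw [show (NK t : ℂ) - (ρ : ℂ) * (t : ℂ) = ((NK t - ρ * t : ℝ) : ℂ) by push_cast; ring,
      Complex.norm_real, Real.norm_eq_abs]
  have hmell : ∀ s : ℂ, mellin F (-s)
      = ∫ t in Set.Ioi (1 : ℝ), ((NK t : ℂ) - (ρ : ℂ) * (t : ℂ)) * (t : ℂ) ^ (-s - 1) := by
    intro s
    rw [mellin]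
    have h1 : ∀ t : ℝ, (t : ℂ) ^ (-s - 1) • F t
        = Set.indicator (Set.Ioi (1 : ℝ))
            (fun t : ℝ => ((NK t : ℂ) - (ρ : ℂ) * (t : ℂ)) * (t : ℂ) ^ (-s - 1)) t := by
      intro t
      by_cases ht : t ∈ Set.Ioi (1 : ℝ)
      · rw [hF, Set.indicator_of_mem ht, Set.indicator_of_mem ht]
        simp only [smul_eq_mul]; ring
      · rw [hF, Set.indicator_of_notMem ht, Set.indicator_of_notMem ht, smul_zero]
    rw [integral_congr_ae (Eventually.of_forall h1)]
    rw [setIntegral_indicator measurableSet_Ioi]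
    rw [show Set.Ioi (0 : ℝ) ∩ Set.Ioi 1 = Set.Ioi 1 by
      rw [Set.Ioi_inter_Ioi]; norm_num]
  -- measurability of F
  have hFmeas : Measurable F := by
    refine Measurable.indicator ?_ measurableSet_Ioi
    exact (Complex.measurable_ofReal.comp hNKmeas).sub
      (Complex.measurable_ofReal.const_mul (ρ : ℂ))
  -- differentiability of the mellin transform
  have hdiff : ∀ s : ℂ, 1 - 1 / m < s.re → DifferentiableAt ℂ (mellin F) (-s) := by
    intro s hs
    refine mellin_differentiableAt_of_isBigO_rpow (a := 1 / m - 1) (b := -s.re - 1)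
      ?_ ?_ ?_ ?_ ?_
    · -- locally integrable
      refine (MeasureTheory.locallyIntegrable_iff.mpr ?_).locallyIntegrableOn _
      intro k hk
      refine Integrable.mono' (g := fun t => C * |t|)
        ((continuous_const.mul continuous_abs).continuousOn.integrableOn_compact hk)
        hFmeas.aestronglyMeasurable ?_
      refine ae_of_all _ fun t => ?_
      by_cases ht : t ∈ Set.Ioi (1 : ℝ)
      · have ht1 : 1 < t := ht
        rw [hFnorm t ht1]
        calc |NK t - ρ * t| ≤ C * t ^ e := hC t ht1.le
          _ ≤ C * t := by
              have : t ^ e ≤ t := by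
                calc t ^ e ≤ t ^ (1 : ℝ) := Real.rpow_le_rpow_of_exponent_le ht1.le he1
                _ = t := Real.rpow_one t
              nlinarith
          _ = C * |t| := by rw [abs_of_pos (by linarith)]
      · rw [hF, Set.indicator_of_notMem ht]
        simp only [norm_zero]
        positivity
    · -- big-O at infinity
      rw [Asymptotics.isBigO_iff]
      refine ⟨C, ?_⟩
      filter_upwards [eventually_ge_atTop (2 : ℝ)] with t ht
      have ht1 : 1 < t := by linarith
      rw [hFnorm t ht1]
      have hnn : ‖t ^ (-(1 / m - 1))‖ = t ^ e := by
        rw [Real.norm_eq_abs, abs_of_nonneg (Real.rpow_nonneg (by linarith) _)]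
        congr 1
        rw [he]; ring
      rw [hnn]
      exact hC t ht1.le
    · simp only [Complex.neg_re]
      linarith
    · -- big-O at zero
      rw [Asymptotics.isBigO_iff]
      refine ⟨0, ?_⟩
      filter_upwards [Ioo_mem_nhdsGT_of_mem
        (Set.mem_Ico.mpr ⟨le_refl (0 : ℝ), zero_lt_one⟩)] with t ht
      rw [hF, Set.indicator_of_notMem (by simp only [Set.mem_Ioi, not_lt]; linarith [ht.2])]
      simp
    · simp only [Complex.neg_re]
      linarith
  -- assemble
  refine ⟨fun s => s * ∫ t in Set.Ioi (1 : ℝ),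
    ((NK t : ℂ) - (ρ : ℂ) * (t : ℂ)) * (t : ℂ) ^ (-s - 1), ?_, ?_, fun s _ => rfl⟩
  · intro s hs
    have heq : (fun s : ℂ => s * ∫ t in Set.Ioi (1 : ℝ),
        ((NK t : ℂ) - (ρ : ℂ) * (t : ℂ)) * (t : ℂ) ^ (-s - 1))
          = fun s : ℂ => s * mellin F (-s) := by
      funext s
      rw [hmell s]
    rw [heq]
    exact differentiableAt_id.mul ((hdiff s hs).comp s (differentiableAt_id.neg))
  · intro s hs
    have h0 : 0 < s.re := by linarith
    have hs0 : s ≠ 0 := by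
      intro h; rw [h] at h0; simp at h0
    have hs1 : s - 1 ≠ 0 := by
      intro h; rw [sub_eq_zero] at h; rw [h] at hs; simp at hs
    have hZint : (∫ t in Set.Ioi (1 : ℝ), (NK t : ℂ) * (t : ℂ) ^ (-s - 1)) = Z s / s :=
      ((hNKint_eq s hs).unique ((hZ s hs).div_const s)).symm ▸ rfl
    have hZint' : (∫ t in Set.Ioi (1 : ℝ), (NK t : ℂ) * (t : ℂ) ^ (-s - 1)) = Z s / s :=
      (hNKint_eq s hs).tsum_eq ▸ ((hZ s hs).div_const s).tsum_eq ▸ rfl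
    show s * ∫ t in Set.Ioi (1 : ℝ),
      ((NK t : ℂ) - (ρ : ℂ) * (t : ℂ)) * (t : ℂ) ^ (-s - 1) = Z s - (ρ : ℂ) * s / (s - 1)
    rw [hsplit s hs, hρint s hs, hZint']
    field_simp
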